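/- Let (A,φ) with operators T_i, T_i^*, T_i′ satisfy conditions (C3) and (C4), and assume moreover that φ is positive, i.e. φ(a^*a) ≥ 0 for all a ∈ A. Then Q_{1,1}(2,1) · Q_{*,1}(2,1) · φ(T_1^* T_1) · φ(T_2^* T_2) = φ((T_2T_1)^*(T_2T_1)) ≥ 0; in particular, if φ(T_1^*T_1) · φ(T_2^*T_2) > 0, then Q_{*,1}(2,1) · Q_{1,1}(2,1) ≥ 0. -/

import Mathlib

open Filter
open scoped BigOperators Classical

/-- The three kinds of labels `1, ∗, ′` for the operators. -/
inductive Eps : Type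
  | one
  | star
  | prime
  deriving DecidableEq

/-- `Teps T T' ε i` is the operator `T_i^ε`. -/
def Teps {A : Type*} [Ring A] [StarRing A] (T T' : ℕ → A) : Eps → ℕ → A
  | Eps.one, i => T i
  | Eps.star, i => star (T i)
  | Eps.prime, i => T' i

/-- The ordered product `T_{i(1)}^{ε(1)} ⋯ T_{i(r)}^{ε(r)}`. -/
def prodT {A : Type*} [Ring A] [StarRing A] (T T' : ℕ → A) {r : ℕ}
    (ε : Fin r → Eps) (i : Fin r → ℕ) : A :=
  (List.ofFn fun j => Teps T T' (ε j) (i j)).prod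

/-- `ker i = π` for a set partition `π` of `[r]`, encoded as a setoid on `Fin r`. -/
def kerEq {r : ℕ} (i : Fin r → ℕ) (π : Setoid (Fin r)) : Prop :=
  ∀ k l, i k = i l ↔ π.r k l

/-- Condition (C1): vanishing means and vanishing of all second mixed moments except
`φ(T_i^* T_i)` and `φ(T_i^* T_i′)`. -/
def C1 {A : Type*} [Ring A] [Algebra ℂ A] [StarRing A]
    (φ : A →ₗ[ℂ] ℂ) (T T' : ℕ → A) : Prop :=
  (∀ (i : ℕ) (e : Eps), φ (Teps T T' e i) = 0) ∧
  (∀ (i : ℕ) (e e' : Eps), ¬ (e = Eps.star ∧ (e' = Eps.one ∨ e' = Eps.prime)) →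
    φ (Teps T T' e i * Teps T T' e' i) = 0)

/-- Condition (C2): uniform bounds for moments with a fixed kernel. -/
def C2 {A : Type*} [Ring A] [Algebra ℂ A] [StarRing A]
    (φ : A →ₗ[ℂ] ℂ) (T T' : ℕ → A) : Prop :=
  ∀ (r : ℕ) (π : Setoid (Fin r)), ∃ ρ : ℝ, 0 ≤ ρ ∧
    ∀ (ε : Fin r → Eps) (i : Fin r → ℕ), kerEq i π →
      ‖φ (prodT T T' ε i)‖ ≤ ρ

/-- Condition (C3): the state factors over interval partitions.  A word whose kernel is an
interval partition is presented as a concatenation of groups, each group having a constant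
index, different groups having distinct indices. -/
def C3 {A : Type*} [Ring A] [Algebra ℂ A] [StarRing A]
    (φ : A →ₗ[ℂ] ℂ) (T T' : ℕ → A) : Prop :=
  ∀ G : List (List (Eps × ℕ)),
    (∀ g ∈ G, g ≠ [] ∧ ∃ m, ∀ x ∈ g, Prod.snd x = m) →
    (G.Pairwise fun g₁ g₂ => ∀ x₁ ∈ g₁, ∀ x₂ ∈ g₂, Prod.snd x₁ ≠ Prod.snd x₂) →
    φ ((G.flatten.map fun x => Teps T T' x.1 x.2).prod) =
      (G.map fun g => φ ((g.map fun x => Teps T T' x.1 x.2).prod)).prod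

/-- Condition (C4): commutation relations `T_i^ε T_j^{ε'} = Q_{ε,ε'}(i,j) T_j^{ε'} T_i^ε`
for `i ≠ j`. -/
def C4 {A : Type*} [Ring A] [Algebra ℂ A] [StarRing A]
    (T T' : ℕ → A) (Q : Eps → Eps → ℕ → ℕ → ℝ) : Prop :=
  ∀ (i j : ℕ), i ≠ j → ∀ (e e' : Eps),
    Teps T T' e i * Teps T T' e' j = (Q e e' i j : ℂ) • (Teps T T' e' j * Teps T T' e i)

/-- A pair partition of `[m]`, encoded as a fixed-point-free involution `p`:
the blocks are the sets `{x, p x}`. -/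
def IsPairing {m : ℕ} (p : Fin m → Fin m) : Prop :=
  ∀ x, p (p x) = x ∧ p x ≠ x

/-- A coloring `f : π → {±1}` of the blocks (encoded pointwise, constant on blocks;
`true` stands for the color `1`, `false` for the color `-1`). -/
def IsColoring {m : ℕ} (p : Fin m → Fin m) (f : Fin m → Bool) : Prop :=
  ∀ x, f (p x) = f x

/-- Membership of a colored pair partition in `P^B_{2,ε}`: on each block `{z, w}` with
`z < w` one has `ε(z) = ∗` and `ε(w) = 1` resp. `′` according to the color. -/
def EpsCompat {m : ℕ} (ε : Fin m → Eps) (p : Fin m → Fin m) (f : Fin m → Bool) : Prop :=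
  ∀ x, x < p x → ε x = Eps.star ∧ ε (p x) = (if f x then Eps.one else Eps.prime)

/-- `ker i = π` for the pair partition encoded by the involution `p`. -/
def kerPair {m : ℕ} (i : Fin m → ℕ) (p : Fin m → Fin m) : Prop :=
  ∀ k l, i k = i l ↔ (k = l ∨ p k = l)

/-- The coefficient `Ξ(π_f, i)`: a product of commutation coefficients over crossing pairs
of blocks and over nesting pairs of blocks.  Here `a, b` run over left legs of blocks. -/
noncomputable def Xi (Q : Eps → Eps → ℕ → ℕ → ℝ) {m : ℕ}
    (p : Fin m → Fin m) (f : Fin m → Bool) (i : Fin m → ℕ) : ℝ :=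
  (∏ a : Fin m, ∏ b : Fin m,
    if a < p a ∧ b < p b ∧ a < b ∧ b < p a ∧ p a < p b then
      Q Eps.star (if f a then Eps.one else Eps.prime) (i b) (i (p a)) else 1) *
  (∏ a : Fin m, ∏ b : Fin m,
    if a < p a ∧ b < p b ∧ a < b ∧ p b < p a then
      Q Eps.star Eps.star (i a) (i b) *
        Q Eps.star (if f b then Eps.one else Eps.prime) (i a) (i (p b)) else 1)

/-- The quantity whose limit (as `N → ∞`) is `λ_{π_f}` in condition (C5):
`N^{-n} ∑_{i ∈ [N]^{2n}, ker i = π} Ξ(π_f,i) ∏_{f=1} φ(T^*T) ∏_{f=-1} φ(T^*T')`. -/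
noncomputable def Ysum {A : Type*} [Ring A] [Algebra ℂ A] [StarRing A]
    (φ : A →ₗ[ℂ] ℂ) (T T' : ℕ → A) (Q : Eps → Eps → ℕ → ℕ → ℝ)
    (n N : ℕ) (p : Fin (2 * n) → Fin (2 * n)) (f : Fin (2 * n) → Bool) : ℂ :=
  ((N : ℂ) ^ n)⁻¹ *
    ∑ i ∈ (Fintype.piFinset fun _ : Fin (2 * n) => Finset.Icc 1 N).filter
        (fun i => kerPair i p),
      ((Xi Q p f i : ℝ) : ℂ) *
        (∏ a : Fin (2 * n),
          if a < p a ∧ f a = true then φ (star (T (i a)) * T (i (p a))) else 1) *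
        (∏ a : Fin (2 * n),
          if a < p a ∧ f a = false then φ (star (T (i a)) * T' (i (p a))) else 1)

/-- The normalized sum `S_N^ε = (T_1^ε + ⋯ + T_N^ε)/√N`. -/
noncomputable def SN {A : Type*} [Ring A] [Algebra ℂ A] [StarRing A]
    (T T' : ℕ → A) (e : Eps) (N : ℕ) : A :=
  ((Real.sqrt N : ℂ))⁻¹ • ∑ k ∈ Finset.Icc 1 N, Teps T T' e k

open scoped ComplexOrder

/-- under (C3), (C4) and positivity of `φ`, one has
`Q_{1,1}(2,1)·Q_{∗,1}(2,1)·φ(T_1^*T_1)·φ(T_2^*T_2) = φ((T_2T_1)^*(T_2T_1)) ≥ 0`;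
in particular if `φ(T_1^*T_1)·φ(T_2^*T_2) > 0` then `Q_{∗,1}(2,1)·Q_{1,1}(2,1) ≥ 0`. -/
theorem stmt8 {A : Type*} [Ring A] [Algebra ℂ A] [StarRing A]
    (φ : A →ₗ[ℂ] ℂ) (hφ1 : φ 1 = 1) (T T' : ℕ → A) (Q : Eps → Eps → ℕ → ℕ → ℝ)
    (hC3 : C3 φ T T') (hC4 : C4 T T' Q)
    (hpos : ∀ a : A, 0 ≤ φ (star a * a)) :
    ((Q Eps.one Eps.one 2 1 : ℂ) * (Q Eps.star Eps.one 2 1 : ℂ) *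
        (φ (star (T 1) * T 1) * φ (star (T 2) * T 2))
      = φ (star (T 2 * T 1) * (T 2 * T 1))) ∧
    (0 ≤ φ (star (T 2 * T 1) * (T 2 * T 1))) ∧
    (0 < φ (star (T 1) * T 1) * φ (star (T 2) * T 2) →
      0 ≤ Q Eps.star Eps.one 2 1 * Q Eps.one Eps.one 2 1) := by

  have hc1 := hC4 2 1 (by norm_num) Eps.one Eps.one
  have hc2 := hC4 2 1 (by norm_num) Eps.star Eps.one
  simp only [Teps] at hc1 hc2
  -- key algebraic identity
  have key : star (T 2 * T 1) * (T 2 * T 1) =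
      ((Q Eps.one Eps.one 2 1 : ℂ) * (Q Eps.star Eps.one 2 1 : ℂ)) •
        ((star (T 1) * T 1) * (star (T 2) * T 2)) := by
    rw [star_mul, mul_assoc, hc1, mul_smul_comm, mul_smul_comm,
      ← mul_assoc (star (T 2)), hc2, smul_mul_assoc, mul_smul_comm, smul_smul]
    congr 1
    simp [mul_assoc]
  -- factorization via C3
  have hfac : φ ((star (T 1) * T 1) * (star (T 2) * T 2)) =
      φ (star (T 1) * T 1) * φ (star (T 2) * T 2) := by
    have := hC3 [[(Eps.star, 1), (Eps.one, 1)], [(Eps.star, 2), (Eps.one, 2)]]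
      (by
        intro g hg
        simp only [List.mem_cons, List.not_mem_nil, or_false] at hg
        rcases hg with rfl | rfl
        · exact ⟨by simp, 1, by intro x hx; simp at hx; rcases hx with rfl | rfl <;> rfl⟩
        · exact ⟨by simp, 2, by intro x hx; simp at hx; rcases hx with rfl | rfl <;> rfl⟩)
      (by decide)
    simpa [Teps, mul_assoc] using this
  have heq : (Q Eps.one Eps.one 2 1 : ℂ) * (Q Eps.star Eps.one 2 1 : ℂ) *
      (φ (star (T 1) * T 1) * φ (star (T 2) * T 2))
      = φ (star (T 2 * T 1) * (T 2 * T 1)) := by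
    rw [key, map_smul, smul_eq_mul, hfac]
  have hge : 0 ≤ φ (star (T 2 * T 1) * (T 2 * T 1)) := hpos _
  refine ⟨heq, hge, ?_⟩
  intro hlt
  set c := φ (star (T 1) * T 1) * φ (star (T 2) * T 2) with hc
  set q := Q Eps.star Eps.one 2 1 * Q Eps.one Eps.one 2 1 with hq
  have heq' : (q : ℂ) * c = φ (star (T 2 * T 1) * (T 2 * T 1)) := by
    rw [← heq, hq]; push_cast; ring
  rw [← heq'] at hge
  have him : c.im = 0 := by
    have := hlt.le
    rw [Complex.le_def] at this
    simpa using this.2.symm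
  have hre : 0 < c.re := by
    rw [Complex.lt_def] at hlt
    simpa using hlt.1
  have h2 : 0 ≤ ((q : ℂ) * c).re := by
    rw [Complex.le_def] at hge
    simpa using hge.1
  have : 0 ≤ q * c.re := by
    simpa [Complex.mul_re, him] using h2
  nlinarith
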